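/- (Babuška–Aziz) There exists a constant C > 0 such that for every C¹ function v : ℝ² → ℝ with ∫₀¹ v(s, 0) ds = 0, one has ∫_{K̂} v² dx ≤ C² ∫_{K̂} |∇v|² dx, where K̂ is the reference triangle. -/

import Mathlib

open MeasureTheory

noncomputable section

abbrev E2 : Type := EuclideanSpace ℝ (Fin 2)

/-- The point (a, b) in the Euclidean plane. -/
def pt (a b : ℝ) : E2 := WithLp.toLp 2 ![a, b]

/-- First standard basis vector. -/
def vex : E2 := pt 1 0
/-- Second standard basis vector. -/
def vey : E2 := pt 0 1

/-- Euclidean dot product on the plane. -/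
def dot2 (v w : E2) : ℝ := v 0 * w 0 + v 1 * w 1

/-- rot (w₁, w₂) = (w₂, −w₁). -/
def rot (w : E2) : E2 := pt (w 1) (-(w 0))

/-- Flux of a vector field across the (oriented) segment from `a` to `b`:
∫₀¹ q(a + t(b − a)) · rot(b − a) dt, the line integral of the normal component. -/
def flux (q : E2 → E2) (a b : E2) : ℝ :=
  ∫ t in (0:ℝ)..1, dot2 (q (a + t • (b - a))) (rot (b - a))

/-- Squared Euclidean norm of the gradient of a scalar function. -/
def gradSq (v : E2 → ℝ) (x : E2) : ℝ :=
  (fderiv ℝ v x vex) ^ 2 + (fderiv ℝ v x vey) ^ 2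

/-- Gradient vector of a scalar function. -/
def gradVec (v : E2 → ℝ) (x : E2) : E2 :=
  pt (fderiv ℝ v x vex) (fderiv ℝ v x vey)

/-- Squared Frobenius norm of the Jacobian of a vector field
(sum of squares of the four first-order partial derivatives). -/
def frobSq (q : E2 → E2) (x : E2) : ℝ :=
  (fderiv ℝ q x vex 0) ^ 2 + (fderiv ℝ q x vey 0) ^ 2 +
  (fderiv ℝ q x vex 1) ^ 2 + (fderiv ℝ q x vey 1) ^ 2

/-- Divergence of a planar vector field. -/
def divg (q : E2 → E2) (x : E2) : ℝ := fderiv ℝ q x vex 0 + fderiv ℝ q x vey 1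

/-- The reference triangle with vertices (0,0), (1,0), (0,1). -/
def Khat : Set E2 := convexHull ℝ {pt 0 0, pt 1 0, pt 0 1}

/-- The triangle with vertices (0,0), (α,0), (0,β). -/
def Kab (a b : ℝ) : Set E2 := convexHull ℝ {pt 0 0, pt a 0, pt 0 b}

/-- Matrix–vector multiplication for 2×2 matrices acting on the plane. -/
def matVec (A : Matrix (Fin 2) (Fin 2) ℝ) (x : E2) : E2 :=
  pt (A 0 0 * x 0 + A 0 1 * x 1) (A 1 0 * x 0 + A 1 1 * x 1)

/-- Squared Frobenius norm of a 2×2 matrix. -/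
def mFrobSq (M : Matrix (Fin 2) (Fin 2) ℝ) : ℝ :=
  M 0 0 ^ 2 + M 0 1 ^ 2 + M 1 0 ^ 2 + M 1 1 ^ 2


namespace BAaux
open intervalIntegral

/- ## coordinate basics -/

lemma pt_apply_0 (a b : ℝ) : pt a b 0 = a := rfl
lemma pt_apply_1 (a b : ℝ) : pt a b 1 = b := rfl
lemma pt_eta (p : E2) : pt (p 0) (p 1) = p := by
  ext i; fin_cases i <;> rfl
lemma pt_add (a b c d : ℝ) : pt a b + pt c d = pt (a+c) (b+d) := by
  ext i; fin_cases i <;> simp [pt]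
lemma pt_smul (t a b : ℝ) : t • pt a b = pt (t*a) (t*b) := by
  ext i; fin_cases i <;> simp [pt]
lemma pt_congr {a b c d : ℝ} (h1 : a = c) (h2 : b = d) : pt a b = pt c d := by
  rw [h1, h2]
lemma pt_line (a b c d t : ℝ) : pt a b + t • pt c d = pt (a + t*c) (b + t*d) := by
  rw [pt_smul, pt_add]
lemma pt_decomp (a b : ℝ) : pt a b = a • vex + b • vey := by
  rw [vex, vey, pt_smul, pt_smul, pt_add]; norm_num
lemma continuous_pt2 : Continuous fun q : ℝ × ℝ => pt q.1 q.2 := by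
  simp only [pt_decomp]; fun_prop

/- ## calculus along lines -/

lemma contP1 {v : E2 → ℝ} (hv : ContDiff ℝ 1 v) : Continuous fun x => fderiv ℝ v x vex :=
  (hv.continuous_fderiv one_ne_zero).clm_apply continuous_const
lemma contP2 {v : E2 → ℝ} (hv : ContDiff ℝ 1 v) : Continuous fun x => fderiv ℝ v x vey :=
  (hv.continuous_fderiv one_ne_zero).clm_apply continuous_const

lemma hasDerivAt_comp_line {v : E2 → ℝ} (hv : ContDiff ℝ 1 v) (p d : E2) (t : ℝ) :
    HasDerivAt (fun t => v (p + t • d)) (fderiv ℝ v (p + t • d) d) t := by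
  have h1 : HasFDerivAt v (fderiv ℝ v (p + t • d)) (p + t • d) :=
    (hv.differentiable one_ne_zero (p + t • d)).hasFDerivAt
  have h2 : HasDerivAt (fun s : ℝ => p + s • d) d t := by
    simpa using ((hasDerivAt_id t).smul_const d).const_add p
  exact h1.comp_hasDerivAt t h2

lemma line_sub_eq_integral {v : E2 → ℝ} (hv : ContDiff ℝ 1 v) (p d : E2) (a b : ℝ) :
    v (p + b • d) - v (p + a • d) = ∫ t in a..b, fderiv ℝ v (p + t • d) d := by
  refine (intervalIntegral.integral_eq_sub_of_hasDerivAt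
    (fun t _ => hasDerivAt_comp_line hv p d t) ?_).symm
  apply Continuous.intervalIntegrable
  exact ((hv.continuous_fderiv one_ne_zero).comp (by fun_prop)).clm_apply continuous_const

lemma fderiv_pt_apply (v : E2 → ℝ) (x : E2) (a b : ℝ) :
    fderiv ℝ v x (pt a b) = a * fderiv ℝ v x vex + b * fderiv ℝ v x vey := by
  rw [pt_decomp, (fderiv ℝ v x).map_add, (fderiv ℝ v x).map_smul, (fderiv ℝ v x).map_smul]
  simp [smul_eq_mul]

/- ## Cauchy-Schwarz on intervals -/

lemma cs_interval {f g : ℝ → ℝ} {a b : ℝ} (hab : a ≤ b)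
    (hf2 : IntervalIntegrable (fun x => f x ^ 2) volume a b)
    (hg2 : IntervalIntegrable (fun x => g x ^ 2) volume a b)
    (hfg : IntervalIntegrable (fun x => f x * g x) volume a b) :
    (∫ x in a..b, f x * g x) ^ 2 ≤ (∫ x in a..b, f x ^ 2) * ∫ x in a..b, g x ^ 2 := by
  have key : ∀ t : ℝ, 0 ≤ (∫ x in a..b, f x ^ 2) * (t * t)
      + (2 * ∫ x in a..b, f x * g x) * t + ∫ x in a..b, g x ^ 2 := by
    intro t
    have h0 : 0 ≤ ∫ x in a..b, (t * f x + g x) ^ 2 :=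
      intervalIntegral.integral_nonneg hab (fun x _ => sq_nonneg _)
    have he : ∀ x, (t * f x + g x) ^ 2
        = t^2 * f x ^ 2 + 2 * t * (f x * g x) + g x ^ 2 := fun x => by ring
    calc (0:ℝ) ≤ ∫ x in a..b, (t * f x + g x) ^ 2 := h0
      _ = (∫ x in a..b, f x ^ 2) * (t * t) + (2 * ∫ x in a..b, f x * g x) * t
          + ∫ x in a..b, g x ^ 2 := by
        simp_rw [he]
        rw [intervalIntegral.integral_add ((hf2.const_mul _).add (hfg.const_mul _)) hg2,
          intervalIntegral.integral_add (hf2.const_mul _) (hfg.const_mul _),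
          intervalIntegral.integral_const_mul, intervalIntegral.integral_const_mul]
        ring
  have hd := discrim_le_zero (a := (∫ x in a..b, f x ^ 2))
    (b := (2 * ∫ x in a..b, f x * g x)) (c := (∫ x in a..b, g x ^ 2)) key
  rw [discrim] at hd
  nlinarith [hd]

lemma sq_integral_le {f : ℝ → ℝ} {a b : ℝ} (hab : a ≤ b)
    (hf : IntervalIntegrable f volume a b)
    (hf2 : IntervalIntegrable (fun x => f x ^ 2) volume a b) :
    (∫ x in a..b, f x) ^ 2 ≤ (b - a) * ∫ x in a..b, f x ^ 2 := by
  have := cs_interval (f := fun _ => (1:ℝ)) (g := f) hab (by simpa using intervalIntegrable_const)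
    hf2 (by simpa using hf)
  simpa using this

/- ## triangle as a region, Fubini -/

def T2 : Set (ℝ × ℝ) := {q | 0 ≤ q.1 ∧ 0 ≤ q.2 ∧ q.1 + q.2 ≤ 1}

lemma measurableSet_T2 : MeasurableSet T2 := by
  apply MeasurableSet.inter (measurableSet_le measurable_const measurable_fst)
  exact MeasurableSet.inter (measurableSet_le measurable_const measurable_snd)
    (measurableSet_le (measurable_fst.add measurable_snd) measurable_const)

lemma isCompact_T2 : IsCompact T2 := by
  have hsub : T2 ⊆ Set.Icc (0,0) (1,1) := by
    rintro ⟨x, y⟩ ⟨h1, h2, h3⟩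
    constructor <;> constructor <;> simp_all <;> linarith
  refine IsCompact.of_isClosed_subset isCompact_Icc ?_ hsub
  apply IsClosed.inter (isClosed_le continuous_const continuous_fst)
  exact IsClosed.inter (isClosed_le continuous_const continuous_snd)
    (isClosed_le (continuous_fst.add continuous_snd) continuous_const)

def ψ : E2 ≃ᵐ ℝ × ℝ :=
  (MeasurableEquiv.toLp 2 (Fin 2 → ℝ)).symm.trans MeasurableEquiv.finTwoArrow

lemma ψ_apply (p : E2) : ψ p = (p 0, p 1) := rfl

lemma ψ_mp : MeasurePreserving ψ volume volume :=
  (volume_preserving_finTwoArrow ℝ).comp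
    (EuclideanSpace.volume_preserving_symm_measurableEquiv_toLp (Fin 2))

lemma Khat_eq : Khat = {p : E2 | 0 ≤ p 0 ∧ 0 ≤ p 1 ∧ p 0 + p 1 ≤ 1} := by
  apply le_antisymm
  · apply convexHull_min
    · rintro p hp
      simp only [Set.mem_insert_iff, Set.mem_singleton_iff] at hp
      rcases hp with rfl | rfl | rfl <;> norm_num [pt, Set.mem_setOf_eq]
    · rintro p ⟨hp0, hp1, hp2⟩ q ⟨hq0, hq1, hq2⟩ a b ha hb hab
      have e0 : (a • p + b • q) 0 = a * p 0 + b * q 0 := rfl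
      have e1 : (a • p + b • q) 1 = a * p 1 + b * q 1 := rfl
      refine ⟨?_, ?_, ?_⟩ <;> simp only [Set.mem_setOf_eq, e0, e1] <;> nlinarith
  · rintro p ⟨h0, h1, h2⟩
    have hc := convex_convexHull ℝ ({pt 0 0, pt 1 0, pt 0 1} : Set E2)
    have m0 : pt 0 0 ∈ Khat := subset_convexHull ℝ _ (by simp)
    have m1 : pt 1 0 ∈ Khat := subset_convexHull ℝ _ (by simp)
    have m2 : pt 0 1 ∈ Khat := subset_convexHull ℝ _ (by simp)
    have hrep : p = ∑ i : Fin 3, (![1 - p 0 - p 1, p 0, p 1] i) • (![pt 0 0, pt 1 0, pt 0 1] i) := by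
      rw [Fin.sum_univ_three]
      simp only [Matrix.cons_val_zero, Matrix.cons_val_one, Matrix.head_cons,
        Matrix.cons_val_two, Matrix.tail_cons]
      rw [pt_smul, pt_smul, pt_smul, pt_add, pt_add]
      nth_rewrite 1 [← pt_eta p]; norm_num
    rw [hrep]
    refine hc.sum_mem (fun i _ => ?_) ?_ (fun i _ => ?_)
    · fin_cases i <;> simp <;> linarith
    · rw [Fin.sum_univ_three]; simp; ring
    · fin_cases i <;> simpa using by first | exact m0 | exact m1 | exact m2

lemma integrableOn_Khat {f : E2 → ℝ} (hf : Continuous f) : IntegrableOn f Khat := by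
  have : IsCompact Khat := (Set.toFinite ({pt 0 0, pt 1 0, pt 0 1} : Set E2)).isCompact_convexHull ℝ
  exact hf.continuousOn.integrableOn_compact this

lemma fubini_Khat {f : E2 → ℝ} (hf : Continuous f) :
    ∫ x in Khat, f x = ∫ y in (0:ℝ)..1, ∫ x in (0:ℝ)..(1 - y), f (pt x y) := by
  set F : ℝ × ℝ → ℝ := fun q => f (pt q.1 q.2) with hF
  have hFc : Continuous F := hf.comp continuous_pt2
  have hKT : Khat = ψ ⁻¹' T2 := by rw [Khat_eq]; rfl
  have h1 : ∫ x in Khat, f x = ∫ q in T2, F q := by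
    rw [← ψ_mp.setIntegral_preimage_emb ψ.measurableEmbedding F T2, ← hKT]
    apply setIntegral_congr_fun (by rw [hKT]; exact ψ.measurable measurableSet_T2)
    intro p _
    show f p = f (pt ((ψ p).1) ((ψ p).2))
    rw [ψ_apply, pt_eta]
  have hIntT2 : IntegrableOn F T2 volume := hFc.continuousOn.integrableOn_compact isCompact_T2
  have hInd : Integrable (T2.indicator F) (volume.prod volume) := by
    rw [← MeasureTheory.Measure.volume_eq_prod ℝ ℝ]
    exact (integrable_indicator_iff measurableSet_T2).2 hIntT2
  have h2 : ∫ q in T2, F q = ∫ y : ℝ, ∫ x : ℝ, T2.indicator F (x, y) := by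
    rw [← MeasureTheory.integral_indicator measurableSet_T2, MeasureTheory.Measure.volume_eq_prod ℝ ℝ]
    exact integral_prod_symm _ hInd
  have hslice : ∀ y : ℝ, (∫ x : ℝ, T2.indicator F (x, y))
      = Set.indicator (Set.Icc (0:ℝ) 1) (fun y => ∫ x in (0:ℝ)..(1 - y), F (x, y)) y := by
    intro y
    by_cases hy : y ∈ Set.Icc (0:ℝ) 1
    · rw [Set.indicator_of_mem hy]
      obtain ⟨hy0, hy1⟩ := hy
      have he : (fun x => T2.indicator F (x, y))
          = (Set.Icc (0:ℝ) (1 - y)).indicator (fun x => F (x, y)) := by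
        funext x
        by_cases hx : x ∈ Set.Icc (0:ℝ) (1 - y)
        · rw [Set.indicator_of_mem hx, Set.indicator_of_mem]
          exact ⟨hx.1, hy0, by linarith [hx.2]⟩
        · rw [Set.indicator_of_notMem hx, Set.indicator_of_notMem]
          intro hmem
          exact hx ⟨hmem.1, by linarith [hmem.2.2]⟩
      rw [he, MeasureTheory.integral_indicator measurableSet_Icc,
        setIntegral_congr_set Ioc_ae_eq_Icc.symm,
        ← intervalIntegral.integral_of_le (by linarith)]
    · rw [Set.indicator_of_notMem hy]
      have he : (fun x => T2.indicator F (x, y)) = fun _ => (0:ℝ) := by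
        funext x
        rw [Set.indicator_of_notMem]
        intro hmem
        rcases hmem with ⟨hm1, hm2, hm3⟩
        exact hy ⟨hm2, by linarith⟩
      rw [he]; simp
  rw [h1, h2]
  simp_rw [hslice]
  rw [MeasureTheory.integral_indicator measurableSet_Icc,
    setIntegral_congr_set Ioc_ae_eq_Icc.symm,
    ← intervalIntegral.integral_of_le (by norm_num : (0:ℝ) ≤ 1)]

/- ## misc integral helpers -/

lemma abs_intervalIntegral_le {h : ℝ → ℝ} {σ s : ℝ} (hσ : σ ∈ Set.Icc (0:ℝ) 1)
    (hs : s ∈ Set.Icc (0:ℝ) 1) (hh : Continuous h) :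
    |∫ τ in σ..s, h τ| ≤ ∫ τ in (0:ℝ)..1, |h τ| := by
  have hi : IntervalIntegrable (fun τ => |h τ|) volume 0 1 :=
    hh.abs.intervalIntegrable _ _
  rcases le_total σ s with hle | hle
  · calc |∫ τ in σ..s, h τ| ≤ ∫ τ in σ..s, |h τ| :=
        intervalIntegral.abs_integral_le_integral_abs hle
      _ ≤ ∫ τ in (0:ℝ)..1, |h τ| :=
        intervalIntegral.integral_mono_interval hσ.1 hle hs.2
          (Filter.Eventually.of_forall fun τ => abs_nonneg _) hi
  · rw [intervalIntegral.integral_symm, abs_neg]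
    calc |∫ τ in s..σ, h τ| ≤ ∫ τ in s..σ, |h τ| :=
        intervalIntegral.abs_integral_le_integral_abs hle
      _ ≤ ∫ τ in (0:ℝ)..1, |h τ| :=
        intervalIntegral.integral_mono_interval hs.1 hle hσ.2
          (Filter.Eventually.of_forall fun τ => abs_nonneg _) hi

lemma swap01 {F : ℝ → ℝ → ℝ} (hF : Continuous (Function.uncurry F)) {y : ℝ} (hy : 0 ≤ y) :
    ∫ σ in (0:ℝ)..1, ∫ τ in (0:ℝ)..y, F σ τ = ∫ τ in (0:ℝ)..y, ∫ σ in (0:ℝ)..1, F σ τ := by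
  have hInt : Integrable (Function.uncurry F)
      ((volume.restrict (Set.Ioc (0:ℝ) 1)).prod (volume.restrict (Set.Ioc (0:ℝ) y))) := by
    rw [Measure.prod_restrict]
    apply IntegrableOn.mono_set (t := (Set.Icc (0:ℝ) 1) ×ˢ (Set.Icc (0:ℝ) y))
    · exact hF.continuousOn.integrableOn_compact (isCompact_Icc.prod isCompact_Icc)
    · exact Set.prod_mono Set.Ioc_subset_Icc_self Set.Ioc_subset_Icc_self
  have := MeasureTheory.integral_integral_swap hInt
  simp only [intervalIntegral.integral_of_le, hy, zero_le_one] at *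
  exact this

lemma int_one_sub_rpow {y r : ℝ} (hy1 : y < 1) (hr : r ≠ -1) :
    ∫ τ in (0:ℝ)..y, (1 - τ) ^ r = ((1:ℝ) - (1-y) ^ (r+1)) / (r+1) := by
  rw [intervalIntegral.integral_comp_sub_left (fun u => u ^ r) 1]
  rw [integral_rpow (Or.inr ⟨hr, by
    rw [Set.mem_uIcc]; push_neg
    constructor <;> intro h <;> nlinarith⟩)]
  norm_num

lemma integrable_one_sub_rpow {r : ℝ} (hr : -1 < r) :
    IntervalIntegrable (fun y : ℝ => (1 - y) ^ r) volume 0 1 := by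
  have := (intervalIntegral.intervalIntegrable_rpow' (a := 0) (b := 1) hr).comp_sub_left 1
  simpa using this.symm

lemma int01_one_sub_rpow {r : ℝ} (hr : -1 < r) :
    ∫ y in (0:ℝ)..1, (1 - y) ^ r = 1 / (r+1) := by
  rw [intervalIntegral.integral_comp_sub_left (fun u => u ^ r) 1]
  simp only [sub_self, sub_zero]
  rw [integral_rpow (Or.inl hr), Real.one_rpow]
  rw [Real.zero_rpow (by linarith)]; ring


lemma comp_mul_left_eq (f : ℝ → ℝ) {c : ℝ} (hc : c ≠ 0) :
    ∫ t in (0:ℝ)..1, f (c * t) = c⁻¹ * ∫ x in (0:ℝ)..c, f x := by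
  have h := intervalIntegral.integral_comp_mul_left f hc (a := 0) (b := 1)
  rw [mul_zero, mul_one, smul_eq_mul] at h
  exact h

/- ## the analytic core -/

def Phi (s y : ℝ) : E2 := pt ((1 - y) * s) y
def DS (v : E2 → ℝ) (t y : ℝ) : ℝ := (1 - y) * fderiv ℝ v (Phi t y) vex
def DY (v : E2 → ℝ) (s t : ℝ) : ℝ := -s * fderiv ℝ v (Phi s t) vex + fderiv ℝ v (Phi s t) vey
def AA (v : E2 → ℝ) (y : ℝ) : ℝ := ∫ t in (0:ℝ)..1, |DS v t y|
def HH (v : E2 → ℝ) (t : ℝ) : ℝ := ∫ s in (0:ℝ)..1, |DY v s t|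
def BB (v : E2 → ℝ) (y : ℝ) : ℝ := ∫ t in (0:ℝ)..y, HH v t
def GG (v : E2 → ℝ) (y : ℝ) : ℝ := ∫ x in (0:ℝ)..(1-y), gradSq v (pt x y)

section core
variable {v : E2 → ℝ} (hv : ContDiff ℝ 1 v)

lemma contPhi : Continuous fun q : ℝ × ℝ => Phi q.1 q.2 := by
  unfold Phi
  exact continuous_pt2.comp (((continuous_const.sub continuous_snd).mul continuous_fst).prodMk continuous_snd)

lemma cont1 {α : Type*} [TopologicalSpace α] {F : ℝ → ℝ → α}
    (h : Continuous fun q : ℝ × ℝ => F q.1 q.2) (y : ℝ) :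
    Continuous fun t => F t y := h.comp (continuous_id.prodMk continuous_const)

include hv

lemma contGradSq : Continuous (gradSq v) := by
  unfold gradSq
  exact ((contP1 hv).pow 2).add ((contP2 hv).pow 2)

omit hv in
lemma gradSq_nonneg (x : E2) : 0 ≤ gradSq v x := by
  unfold gradSq; positivity

lemma contDS : Continuous fun q : ℝ × ℝ => DS v q.1 q.2 := by
  unfold DS
  exact (continuous_const.sub continuous_snd).mul ((contP1 hv).comp contPhi)

lemma contDY : Continuous fun q : ℝ × ℝ => DY v q.1 q.2 := by
  unfold DY
  exact ((continuous_fst.neg).mul ((contP1 hv).comp contPhi)).add ((contP2 hv).comp contPhi)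

lemma contAA : Continuous (AA v) := by
  unfold AA
  exact intervalIntegral.continuous_parametric_intervalIntegral_of_continuous'
    (f := fun y t => |DS v t y|) (((contDS hv).comp continuous_swap).abs) 0 1

lemma contHH : Continuous (HH v) := by
  unfold HH
  exact intervalIntegral.continuous_parametric_intervalIntegral_of_continuous'
    (f := fun t s => |DY v s t|) (((contDY hv).comp continuous_swap).abs) 0 1

lemma contBB : Continuous (BB v) := by
  unfold BB
  exact intervalIntegral.continuous_parametric_intervalIntegral_of_continuous
    (f := fun _ t => HH v t) ((contHH hv).comp continuous_snd) continuous_id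

lemma contGG : Continuous (GG v) := by
  unfold GG
  exact intervalIntegral.continuous_parametric_intervalIntegral_of_continuous
    (f := fun y x => gradSq v (pt x y))
    ((contGradSq hv).comp (continuous_pt2.comp continuous_swap))
    (continuous_const.sub continuous_id)

lemma GG_nonneg {y : ℝ} (hy : y ≤ 1) : 0 ≤ GG v y :=
  intervalIntegral.integral_nonneg (by linarith) (fun x _ => gradSq_nonneg (v := v) _)

lemma key1 (y σ s : ℝ) : v (Phi s y) - v (Phi σ y) = ∫ t in σ..s, DS v t y := by
  have hpts : ∀ t : ℝ, pt 0 y + t • pt (1-y) 0 = Phi t y := fun t => by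
    rw [pt_line]; exact pt_congr (by ring) (by ring)
  have h2 : ∀ t : ℝ, fderiv ℝ v (Phi t y) (pt (1-y) 0) = DS v t y := fun t => by
    rw [fderiv_pt_apply]; unfold DS; ring
  calc v (Phi s y) - v (Phi σ y)
      = ∫ t in σ..s, fderiv ℝ v (pt 0 y + t • pt (1-y) 0) (pt (1-y) 0) := by
        rw [← hpts s, ← hpts σ]; exact line_sub_eq_integral hv _ _ σ s
    _ = ∫ t in σ..s, DS v t y := by
        apply intervalIntegral.integral_congr
        intro t _
        show (fderiv ℝ v (pt 0 y + t • pt (1-y) 0)) (pt (1-y) 0) = DS v t y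
        rw [hpts t, h2 t]

lemma key2 (σ y : ℝ) : v (Phi σ y) - v (Phi σ 0) = ∫ t in (0:ℝ)..y, DY v σ t := by
  have hpts : ∀ t : ℝ, pt σ 0 + t • pt (-σ) 1 = Phi σ t := fun t => by
    rw [pt_line]; exact pt_congr (by ring) (by ring)
  have h2 : ∀ t : ℝ, fderiv ℝ v (Phi σ t) (pt (-σ) 1) = DY v σ t := fun t => by
    rw [fderiv_pt_apply]; unfold DY; ring
  calc v (Phi σ y) - v (Phi σ 0)
      = ∫ t in (0:ℝ)..y, fderiv ℝ v (pt σ 0 + t • pt (-σ) 1) (pt (-σ) 1) := by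
        rw [← hpts y, ← hpts 0]; exact line_sub_eq_integral hv _ _ 0 y
    _ = ∫ t in (0:ℝ)..y, DY v σ t := by
        apply intervalIntegral.integral_congr
        intro t _
        show (fderiv ℝ v (pt σ 0 + t • pt (-σ) 1)) (pt (-σ) 1) = DY v σ t
        rw [hpts t, h2 t]

lemma identity (hmean : (∫ s in (0:ℝ)..1, v (pt s 0)) = 0) (s y : ℝ) :
    v (Phi s y) = (∫ σ in (0:ℝ)..1, ∫ t in σ..s, DS v t y)
      + ∫ σ in (0:ℝ)..1, ∫ t in (0:ℝ)..y, DY v σ t := by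
  have hI1 : IntervalIntegrable (fun σ => ∫ t in σ..s, DS v t y) volume 0 1 := by
    have hc : Continuous fun σ => ∫ t in σ..s, DS v t y := by
      have hb : Continuous fun σ => ∫ t in s..σ, DS v t y :=
        intervalIntegral.continuous_primitive
          (fun a b => ((cont1 (contDS hv) y)).intervalIntegrable a b) s
      have : (fun σ => ∫ t in σ..s, DS v t y) = fun σ => -∫ t in s..σ, DS v t y := by
        funext σ; rw [intervalIntegral.integral_symm]
      rw [this]; exact hb.neg
    exact hc.intervalIntegrable 0 1
  have hI2 : IntervalIntegrable (fun σ => ∫ t in (0:ℝ)..y, DY v σ t) volume 0 1 := by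
    apply Continuous.intervalIntegrable
    exact intervalIntegral.continuous_parametric_intervalIntegral_of_continuous'
      (f := fun σ t => DY v σ t) (contDY hv) 0 y
  have e : ∀ σ : ℝ, (∫ t in σ..s, DS v t y) + (∫ t in (0:ℝ)..y, DY v σ t)
      = v (Phi s y) - v (Phi σ 0) := by
    intro σ; rw [← key1 hv y σ s, ← key2 hv σ y]; ring
  have hwc : Continuous fun σ => v (Phi σ 0) :=
    hv.continuous.comp (cont1 contPhi 0)
  have calc1 : (∫ σ in (0:ℝ)..1, ∫ t in σ..s, DS v t y)
      + (∫ σ in (0:ℝ)..1, ∫ t in (0:ℝ)..y, DY v σ t)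
      = ∫ σ in (0:ℝ)..1, (v (Phi s y) - v (Phi σ 0)) := by
    rw [← intervalIntegral.integral_add hI1 hI2]
    exact intervalIntegral.integral_congr fun σ _ => e σ
  rw [calc1, intervalIntegral.integral_sub (intervalIntegrable_const)
    (hwc.intervalIntegrable 0 1)]
  have : (∫ σ in (0:ℝ)..1, v (Phi σ 0)) = ∫ σ in (0:ℝ)..1, v (pt σ 0) := by
    apply intervalIntegral.integral_congr
    intro σ _
    show v (Phi σ 0) = v (pt σ 0)
    unfold Phi
    congr 1
    exact pt_congr (by ring) rfl
  rw [this, hmean]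
  simp

lemma ptwise (hmean : (∫ s in (0:ℝ)..1, v (pt s 0)) = 0)
    {s y : ℝ} (hs : s ∈ Set.Icc (0:ℝ) 1) (hy : y ∈ Set.Icc (0:ℝ) 1) :
    (v (Phi s y)) ^ 2 ≤ 2 * AA v y ^ 2 + 2 * BB v y ^ 2 := by
  have hAnn : 0 ≤ AA v y :=
    intervalIntegral.integral_nonneg zero_le_one (fun t _ => abs_nonneg _)
  have hBnn : 0 ≤ BB v y := by
    apply intervalIntegral.integral_nonneg hy.1
    intro t _
    exact intervalIntegral.integral_nonneg zero_le_one (fun σ _ => abs_nonneg _)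
  have t1 : |∫ σ in (0:ℝ)..1, ∫ t in σ..s, DS v t y| ≤ AA v y := by
    calc |∫ σ in (0:ℝ)..1, ∫ t in σ..s, DS v t y|
        ≤ ∫ σ in (0:ℝ)..1, |∫ t in σ..s, DS v t y| :=
          intervalIntegral.abs_integral_le_integral_abs zero_le_one
      _ ≤ ∫ σ in (0:ℝ)..1, AA v y := by
          apply intervalIntegral.integral_mono_on zero_le_one ?_ intervalIntegrable_const
          · intro σ hσ
            exact abs_intervalIntegral_le hσ hs (cont1 (contDS hv) y)
          · have hc : Continuous fun σ => ∫ t in s..σ, DS v t y :=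
              intervalIntegral.continuous_primitive
                (fun a b => ((cont1 (contDS hv) y)).intervalIntegrable a b) s
            have he : (fun σ => |∫ t in σ..s, DS v t y|)
                = fun σ => |∫ t in s..σ, DS v t y| := by
              funext σ; rw [intervalIntegral.integral_symm, abs_neg]
            rw [he]
            exact hc.abs.intervalIntegrable 0 1
      _ = AA v y := by simp
  have t2 : |∫ σ in (0:ℝ)..1, ∫ t in (0:ℝ)..y, DY v σ t| ≤ BB v y := by
    have habs : Continuous fun q : ℝ × ℝ => |DY v q.1 q.2| := (contDY hv).abs
    calc |∫ σ in (0:ℝ)..1, ∫ t in (0:ℝ)..y, DY v σ t|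
        ≤ ∫ σ in (0:ℝ)..1, |∫ t in (0:ℝ)..y, DY v σ t| :=
          intervalIntegral.abs_integral_le_integral_abs zero_le_one
      _ ≤ ∫ σ in (0:ℝ)..1, ∫ t in (0:ℝ)..y, |DY v σ t| := by
          apply intervalIntegral.integral_mono_on zero_le_one
          · have hc : Continuous fun σ => ∫ t in (0:ℝ)..y, DY v σ t :=
              intervalIntegral.continuous_parametric_intervalIntegral_of_continuous'
                (f := fun σ t => DY v σ t) (contDY hv) 0 y
            exact hc.abs.intervalIntegrable 0 1
          · apply Continuous.intervalIntegrable
            exact intervalIntegral.continuous_parametric_intervalIntegral_of_continuous'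
              (f := fun σ t => |DY v σ t|) habs 0 y
          · intro σ _
            exact intervalIntegral.abs_integral_le_integral_abs hy.1
      _ = ∫ t in (0:ℝ)..y, ∫ σ in (0:ℝ)..1, |DY v σ t| := by
          exact swap01 (F := fun σ t => |DY v σ t|) habs hy.1
      _ = BB v y := rfl
  have hw : |v (Phi s y)| ≤ AA v y + BB v y := by
    rw [identity hv hmean s y]
    exact (abs_add_le _ _).trans (add_le_add t1 t2)
  have h1 : (v (Phi s y)) ^ 2 ≤ (AA v y + BB v y) ^ 2 := by
    rw [← sq_abs]
    exact pow_le_pow_left₀ (abs_nonneg _) hw 2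
  nlinarith [sq_nonneg (AA v y - BB v y)]

lemma boundA {y : ℝ} (hy : y ∈ Set.Icc (0:ℝ) 1) : AA v y ^ 2 ≤ GG v y := by
  rcases eq_or_lt_of_le hy.2 with hy1 | hy1
  · have hz : ∀ t : ℝ, DS v t y = 0 := by
      intro t; unfold DS; rw [← hy1]; ring
    have hA0 : AA v y = 0 := by
      unfold AA; simp [hz]
    have hG0 : GG v y = 0 := by
      unfold GG; rw [← hy1]; simp
    rw [hA0, hG0]; norm_num
  · have hc : (0:ℝ) < 1 - y := by linarith
    have step1 : AA v y ^ 2 ≤ (1 - 0) * ∫ t in (0:ℝ)..1, |DS v t y| ^ 2 := by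
      apply sq_integral_le zero_le_one
      · exact (cont1 (contDS hv) y).abs.intervalIntegrable 0 1
      · exact ((cont1 (contDS hv) y).abs.pow 2).intervalIntegrable 0 1
    have step2 : (∫ t in (0:ℝ)..1, |DS v t y| ^ 2)
        = (1-y)^2 * ∫ t in (0:ℝ)..1, (fderiv ℝ v (pt ((1-y)*t) y) vex) ^ 2 := by
      rw [← intervalIntegral.integral_const_mul]
      apply intervalIntegral.integral_congr
      intro t _
      show |DS v t y| ^ 2 = (1-y)^2 * (fderiv ℝ v (pt ((1-y)*t) y)) vex ^ 2
      rw [sq_abs]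
      unfold DS Phi
      ring
    have step3 : (∫ t in (0:ℝ)..1, (fderiv ℝ v (pt ((1-y)*t) y) vex) ^ 2)
        = (1-y)⁻¹ * ∫ x in (0:ℝ)..(1-y), (fderiv ℝ v (pt x y) vex) ^ 2 :=
      comp_mul_left_eq (fun x => (fderiv ℝ v (pt x y) vex) ^ 2) hc.ne'
    have step4 : (∫ x in (0:ℝ)..(1-y), (fderiv ℝ v (pt x y) vex) ^ 2) ≤ GG v y := by
      unfold GG
      apply intervalIntegral.integral_mono_on hc.le
      · exact ((contP1 hv).comp (cont1 continuous_pt2 y)).pow 2 |>.intervalIntegrable 0 _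
      · exact ((contGradSq hv).comp (cont1 continuous_pt2 y)).intervalIntegrable 0 _
      · intro x _
        unfold gradSq
        exact le_add_of_nonneg_right (sq_nonneg _)
    have hnn : 0 ≤ ∫ x in (0:ℝ)..(1-y), (fderiv ℝ v (pt x y) vex) ^ 2 :=
      intervalIntegral.integral_nonneg hc.le (fun x _ => sq_nonneg _)
    calc AA v y ^ 2 ≤ (1-0) * ∫ t in (0:ℝ)..1, |DS v t y| ^ 2 := step1
      _ = (1-y) * ∫ x in (0:ℝ)..(1-y), (fderiv ℝ v (pt x y) vex) ^ 2 := by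
          rw [step2, step3]; field_simp; ring
      _ ≤ 1 * ∫ x in (0:ℝ)..(1-y), (fderiv ℝ v (pt x y) vex) ^ 2 := by
          apply mul_le_mul_of_nonneg_right (by linarith [hy.1]) hnn
      _ = ∫ x in (0:ℝ)..(1-y), (fderiv ℝ v (pt x y) vex) ^ 2 := one_mul _
      _ ≤ GG v y := step4

lemma boundH {t : ℝ} (ht0 : 0 ≤ t) (ht1 : t < 1) :
    HH v t ^ 2 ≤ 2 * (1-t)⁻¹ * GG v t := by
  have hc : (0:ℝ) < 1 - t := by linarith
  have step1 : HH v t ^ 2 ≤ (1 - 0) * ∫ σ in (0:ℝ)..1, |DY v σ t| ^ 2 := by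
    apply sq_integral_le zero_le_one
    · exact (cont1 (contDY hv) t).abs.intervalIntegrable 0 1
    · exact ((cont1 (contDY hv) t).abs.pow 2).intervalIntegrable 0 1
  have step2 : (∫ σ in (0:ℝ)..1, |DY v σ t| ^ 2)
      ≤ ∫ σ in (0:ℝ)..1, 2 * gradSq v (Phi σ t) := by
    apply intervalIntegral.integral_mono_on zero_le_one
    · exact ((cont1 (contDY hv) t).abs.pow 2).intervalIntegrable 0 1
    · exact (continuous_const.mul ((contGradSq hv).comp (cont1 contPhi t))).intervalIntegrable 0 1
    · intro σ hσ
      rw [sq_abs]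
      unfold DY gradSq
      nlinarith [sq_nonneg (σ * fderiv ℝ v (Phi σ t) vex + fderiv ℝ v (Phi σ t) vey),
        mul_nonneg (mul_nonneg (sub_nonneg.2 hσ.2) (by linarith [hσ.1] : (0:ℝ) ≤ 1 + σ))
          (sq_nonneg (fderiv ℝ v (Phi σ t) vex))]
  have step3 : (∫ σ in (0:ℝ)..1, 2 * gradSq v (Phi σ t))
      = 2 * ((1-t)⁻¹ * GG v t) := by
    rw [intervalIntegral.integral_const_mul]
    congr 1
    have h := comp_mul_left_eq (fun x => gradSq v (pt x t)) hc.ne'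
    unfold GG
    rw [← h]
    apply intervalIntegral.integral_congr
    intro σ _
    rfl
  calc HH v t ^ 2 ≤ (1-0) * ∫ σ in (0:ℝ)..1, |DY v σ t| ^ 2 := step1
    _ = ∫ σ in (0:ℝ)..1, |DY v σ t| ^ 2 := by ring_nf
    _ ≤ ∫ σ in (0:ℝ)..1, 2 * gradSq v (Phi σ t) := step2
    _ = 2 * (1-t)⁻¹ * GG v t := by rw [step3]; ring

lemma boundB {y : ℝ} (hy0 : 0 ≤ y) (hy1 : y < 1) :
    BB v y ^ 2 ≤ 4 * (∫ τ in (0:ℝ)..1, GG v τ) * (1-y) ^ (-(1/2) : ℝ) := by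
  set D : ℝ := ∫ τ in (0:ℝ)..1, GG v τ with hD
  have hDnn : 0 ≤ D := intervalIntegral.integral_nonneg zero_le_one
    (fun τ hτ => GG_nonneg hv hτ.2)
  have hpos : ∀ τ ∈ Set.uIcc (0:ℝ) y, (0:ℝ) < 1 - τ := by
    intro τ hτ
    rw [Set.uIcc_of_le hy0] at hτ
    have := hτ.2; linarith
  set f : ℝ → ℝ := fun τ => (1-τ) ^ (-(3/4) : ℝ) with hf
  set g : ℝ → ℝ := fun τ => (1-τ) ^ ((3/4) : ℝ) * HH v τ with hg
  have hcont_base : ContinuousOn (fun τ : ℝ => 1 - τ) (Set.uIcc 0 y) :=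
    (continuous_const.sub continuous_id).continuousOn
  have hfc : ContinuousOn f (Set.uIcc 0 y) :=
    hcont_base.rpow_const (fun τ hτ => Or.inl (hpos τ hτ).ne')
  have hgc : ContinuousOn g (Set.uIcc 0 y) :=
    (hcont_base.rpow_const (fun τ hτ => Or.inl (hpos τ hτ).ne')).mul (contHH hv).continuousOn
  have hf2 : IntervalIntegrable (fun τ => f τ ^ 2) volume 0 y := (hfc.pow 2).intervalIntegrable
  have hg2 : IntervalIntegrable (fun τ => g τ ^ 2) volume 0 y := (hgc.pow 2).intervalIntegrable
  have hfg : IntervalIntegrable (fun τ => f τ * g τ) volume 0 y := (hfc.mul hgc).intervalIntegrable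
  have hBeq : BB v y = ∫ τ in (0:ℝ)..y, f τ * g τ := by
    unfold BB
    apply intervalIntegral.integral_congr
    intro τ hτ
    have hp := hpos τ hτ
    show HH v τ = f τ * g τ
    show HH v τ = (1-τ)^(-(3/4):ℝ) * ((1-τ)^((3/4):ℝ) * HH v τ)
    rw [← mul_assoc, ← Real.rpow_add hp]
    norm_num
  have hcs := cs_interval hy0 hf2 hg2 hfg
  have hXnn : (0:ℝ) ≤ (1-y) ^ (-(1/2):ℝ) := Real.rpow_nonneg (by linarith) _
  have hF : (∫ τ in (0:ℝ)..y, f τ ^ 2) ≤ 2 * (1-y) ^ (-(1/2):ℝ) := by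
    have he : ∀ τ ∈ Set.uIcc (0:ℝ) y, f τ ^ 2 = (1-τ) ^ (-(3/2):ℝ) := by
      intro τ hτ
      show ((1-τ)^(-(3/4):ℝ))^2 = _
      rw [sq, ← Real.rpow_add (hpos τ hτ)]
      norm_num
    rw [intervalIntegral.integral_congr he, int_one_sub_rpow hy1 (by norm_num)]
    have he2 : (-(3/2):ℝ) + 1 = -(1/2) := by norm_num
    rw [he2]
    have h9 : (1 - (1-y)^(-(1/2):ℝ)) / -(1/2) = 2 * (1-y)^(-(1/2):ℝ) - 2 := by ring
    rw [h9]
    linarith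
  have hGnn : (0:ℝ) ≤ ∫ τ in (0:ℝ)..y, g τ ^ 2 :=
    intervalIntegral.integral_nonneg hy0 (fun τ _ => sq_nonneg _)
  have hFnn : (0:ℝ) ≤ ∫ τ in (0:ℝ)..y, f τ ^ 2 :=
    intervalIntegral.integral_nonneg hy0 (fun τ _ => sq_nonneg _)
  have hG : (∫ τ in (0:ℝ)..y, g τ ^ 2) ≤ 2 * D := by
    have h1 : (∫ τ in (0:ℝ)..y, g τ ^ 2) ≤ ∫ τ in (0:ℝ)..y, 2 * GG v τ := by
      apply intervalIntegral.integral_mono_on hy0 hg2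
      · exact (continuous_const.mul (contGG hv)).intervalIntegrable 0 y
      · intro τ hτ
        have hτ1 : τ < 1 := lt_of_le_of_lt hτ.2 hy1
        have hp : (0:ℝ) < 1 - τ := by linarith
        have hHb := boundH hv hτ.1 hτ1
        have hgg : g τ ^ 2 = (1-τ)^((3/2):ℝ) * HH v τ ^ 2 := by
          show ((1-τ)^((3/4):ℝ) * HH v τ)^2 = _
          rw [mul_pow, sq ((1-τ)^((3/4):ℝ)), ← Real.rpow_add hp]
          norm_num
        rw [hgg]
        have h2 : (1-τ)^((3/2):ℝ) * HH v τ ^2 ≤ (1-τ)^((3/2):ℝ) * (2 * (1-τ)⁻¹ * GG v τ) :=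
          mul_le_mul_of_nonneg_left hHb (Real.rpow_nonneg hp.le _)
        have h3 : (1-τ)^((3/2):ℝ) * (2 * (1-τ)⁻¹ * GG v τ)
            = 2 * ((1-τ)^((3/2):ℝ) * (1-τ)^((-1:ℝ))) * GG v τ := by
          rw [Real.rpow_neg_one]; ring
        have h4 : (1-τ)^((3/2):ℝ) * (1-τ)^((-1:ℝ)) = (1-τ)^((1/2):ℝ) := by
          rw [← Real.rpow_add hp]; norm_num
        have h5 : (1-τ)^((1/2):ℝ) ≤ 1 :=
          Real.rpow_le_one (by linarith) (by linarith [hτ.1]) (by norm_num)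
        have h6 : 0 ≤ GG v τ := GG_nonneg hv hτ1.le
        calc (1-τ)^((3/2):ℝ) * HH v τ ^2
            ≤ 2 * ((1-τ)^((1/2):ℝ)) * GG v τ := by rw [← h4, ← h3]; exact h2
          _ ≤ 2 * GG v τ := by nlinarith
    have h2 : (∫ τ in (0:ℝ)..y, 2 * GG v τ) ≤ ∫ τ in (0:ℝ)..1, 2 * GG v τ := by
      apply intervalIntegral.integral_mono_interval le_rfl hy0 hy1.le
      · exact (ae_restrict_mem measurableSet_Ioc).mono
          (fun τ hτ => mul_nonneg zero_le_two (GG_nonneg hv hτ.2))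
      · exact (continuous_const.mul (contGG hv)).intervalIntegrable 0 1
    have h3 : (∫ τ in (0:ℝ)..1, 2 * GG v τ) = 2 * D := by
      rw [intervalIntegral.integral_const_mul]
    linarith
  rw [hBeq]
  calc (∫ τ in (0:ℝ)..y, f τ * g τ) ^ 2
      ≤ (∫ τ in (0:ℝ)..y, f τ ^ 2) * ∫ τ in (0:ℝ)..y, g τ ^ 2 := hcs
    _ ≤ (2 * (1-y) ^ (-(1/2):ℝ)) * (2 * D) :=
        mul_le_mul hF hG hGnn (by positivity)
    _ = 4 * D * (1-y) ^ (-(1/2):ℝ) := by ring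

lemma boundInner (hmean : (∫ s in (0:ℝ)..1, v (pt s 0)) = 0)
    {y : ℝ} (hy : y ∈ Set.Icc (0:ℝ) 1) :
    (∫ x in (0:ℝ)..(1-y), (v (pt x y))^2)
      ≤ 2 * GG v y + 8 * (∫ τ in (0:ℝ)..1, GG v τ) * (1-y) ^ (-(1/2):ℝ) := by
  rcases eq_or_lt_of_le hy.2 with hy1 | hy1
  · subst hy1
    rw [sub_self, intervalIntegral.integral_same,
      Real.zero_rpow (by norm_num : (-(1/2):ℝ) ≠ 0)]
    have hG1 : GG v 1 = 0 := by
      unfold GG; rw [sub_self, intervalIntegral.integral_same]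
    rw [hG1]
    norm_num
  · have hc : (0:ℝ) < 1 - y := by linarith
    have hsub : (∫ x in (0:ℝ)..(1-y), (v (pt x y))^2)
        = (1-y) * ∫ s in (0:ℝ)..1, (v (Phi s y))^2 := by
      have h := comp_mul_left_eq (fun x => (v (pt x y))^2) hc.ne'
      have h2 : (∫ t in (0:ℝ)..1, (v (pt ((1-y)*t) y))^2)
          = ∫ s in (0:ℝ)..1, (v (Phi s y))^2 := rfl
      rw [← h2, h]
      field_simp
    have hIn : (0:ℝ) ≤ ∫ s in (0:ℝ)..1, (v (Phi s y))^2 :=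
      intervalIntegral.integral_nonneg zero_le_one (fun s _ => sq_nonneg _)
    have hest : (∫ s in (0:ℝ)..1, (v (Phi s y))^2) ≤ 2 * AA v y ^2 + 2 * BB v y ^2 := by
      have hmono := intervalIntegral.integral_mono_on (μ := volume) zero_le_one
        ((((hv.continuous.comp (cont1 contPhi y))).pow 2).intervalIntegrable 0 1)
        intervalIntegrable_const
        (fun s hs => ptwise hv hmean hs hy)
      simpa using hmono
    have h1 := boundA hv hy
    have h2 := boundB hv hy.1 hy1
    calc (∫ x in (0:ℝ)..(1-y), (v (pt x y))^2)
        = (1-y) * ∫ s in (0:ℝ)..1, (v (Phi s y))^2 := hsub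
      _ ≤ 1 * ∫ s in (0:ℝ)..1, (v (Phi s y))^2 :=
          mul_le_mul_of_nonneg_right (by linarith [hy.1]) hIn
      _ = ∫ s in (0:ℝ)..1, (v (Phi s y))^2 := one_mul _
      _ ≤ 2 * AA v y ^2 + 2 * BB v y ^2 := hest
      _ ≤ 2 * GG v y + 8 * (∫ τ in (0:ℝ)..1, GG v τ) * (1-y) ^ (-(1/2):ℝ) := by linarith

end core

end BAaux


open BAaux

/-- Babuška–Aziz: there is a constant `C` such that every C¹ function on the
reference triangle whose mean over the bottom edge vanishes satisfies
`∫_{K̂} v² ≤ C² ∫_{K̂} |∇v|²`. -/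
theorem stmt7 :
    ∃ C > (0:ℝ), ∀ v : E2 → ℝ, ContDiff ℝ 1 v →
      (∫ s in (0:ℝ)..1, v (pt s 0)) = 0 →
      (∫ x in Khat, (v x) ^ 2) ≤ C ^ 2 * ∫ x in Khat, gradSq v x := by
  refine ⟨5, by norm_num, ?_⟩
  intro v hv hmean
  have hvc := hv.continuous
  set D : ℝ := ∫ τ in (0:ℝ)..1, GG v τ with hD
  have hDnn : 0 ≤ D := intervalIntegral.integral_nonneg zero_le_one
    (fun τ hτ => GG_nonneg hv hτ.2)
  have hRHS : (∫ x in Khat, gradSq v x) = D := fubini_Khat (contGradSq hv)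
  have hLHS : (∫ x in Khat, (v x)^2)
      = ∫ y in (0:ℝ)..1, ∫ x in (0:ℝ)..(1-y), (v (pt x y))^2 :=
    fubini_Khat (f := fun x => (v x)^2) (hvc.pow 2)
  rw [hLHS, hRHS]
  have hIrpow : IntervalIntegrable (fun y : ℝ => 8 * D * (1-y) ^ (-(1/2):ℝ)) volume 0 1 :=
    (integrable_one_sub_rpow (by norm_num)).const_mul (8 * D)
  have hIG : IntervalIntegrable (fun y => 2 * GG v y) volume 0 1 :=
    (continuous_const.mul (contGG hv)).intervalIntegrable 0 1
  have hmono : (∫ y in (0:ℝ)..1, ∫ x in (0:ℝ)..(1-y), (v (pt x y))^2)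
      ≤ ∫ y in (0:ℝ)..1, (2 * GG v y + 8 * D * (1-y) ^ (-(1/2):ℝ)) := by
    apply intervalIntegral.integral_mono_on zero_le_one
    · apply Continuous.intervalIntegrable
      exact intervalIntegral.continuous_parametric_intervalIntegral_of_continuous
        (f := fun y x => (v (pt x y))^2)
        (by exact (hvc.comp (continuous_pt2.comp continuous_swap)).pow 2)
        (continuous_const.sub continuous_id)
    · exact hIG.add hIrpow
    · intro y hy; exact boundInner hv hmean hy
  have hval : (∫ y in (0:ℝ)..1, (2 * GG v y + 8 * D * (1-y) ^ (-(1/2):ℝ)))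
      = 2 * D + 16 * D := by
    rw [intervalIntegral.integral_add hIG hIrpow,
      intervalIntegral.integral_const_mul, intervalIntegral.integral_const_mul,
      int01_one_sub_rpow (by norm_num)]
    norm_num
    ring
  have : (∫ y in (0:ℝ)..1, ∫ x in (0:ℝ)..(1-y), (v (pt x y))^2) ≤ 2 * D + 16 * D :=
    hmono.trans (le_of_eq hval)
  nlinarith


end
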